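/- Let J be continuous, nonnegative, bounded with ∫_ℝ J = 1, let d > 0, f'(0) ∈ ℝ, and for a bounded interval (−l,l) let λ_l be a real number admitting a strictly positive continuous eigenfunction φ_l on [−l,l] satisfying d·∫_{−l}^{l} J(x−y)·φ_l(y) dy − d·φ_l(x) + f'(0)·φ_l(x) = λ_l·φ_l(x) for all x ∈ [−l,l]. Then |λ_l − f'(0) + d| ≤ 2·l·d·‖J‖_∞. In particular λ_l → f'(0) − d as l → 0⁺. -/

import Mathlib

open MeasureTheory

theorem stmt18 (J : ℝ → ℝ) (d f0 : ℝ) (hd : 0 < d)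
    (hJc : Continuous J) (hJpos : ∀ x, 0 ≤ J x) (hJbdd : BddAbove (Set.range J))
    (hJint : Integrable J) (hJ1 : (∫ x, J x) = 1)
    (lam : ℝ → ℝ) (φ : ℝ → ℝ → ℝ)
    (hφc : ∀ l > (0:ℝ), ContinuousOn (φ l) (Set.Icc (-l) l))
    (hφpos : ∀ l > (0:ℝ), ∀ x ∈ Set.Icc (-l) l, 0 < φ l x)
    (heig : ∀ l > (0:ℝ), ∀ x ∈ Set.Icc (-l) l,
      d * (∫ y in Set.Icc (-l) l, J (x - y) * φ l y) - d * φ l x + f0 * φ l x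
        = lam l * φ l x) :
    (∀ l > (0:ℝ), |lam l - f0 + d| ≤ 2 * l * d * (⨆ x, J x)) ∧
    Filter.Tendsto lam (nhdsWithin 0 (Set.Ioi 0)) (nhds (f0 - d)) := by
  set M := ⨆ x, J x with hMdef
  have hM0 : 0 ≤ M := le_trans (hJpos 0) (le_ciSup hJbdd 0)
  have key : ∀ l > (0:ℝ), 0 ≤ lam l - f0 + d ∧ lam l - f0 + d ≤ 2 * l * d * M := by
    intro l hl
    obtain ⟨x₀, hx₀, hmax⟩ := isCompact_Icc.exists_isMaxOn
      (Set.nonempty_Icc.mpr (by linarith)) (hφc l hl)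
    have hφ0 : 0 < φ l x₀ := hφpos l hl x₀ hx₀
    have heq := heig l hl x₀ hx₀
    have hInt : IntegrableOn (fun y => J (x₀ - y) * φ l y) (Set.Icc (-l) l) :=
      (((hJc.comp (continuous_const.sub continuous_id)).continuousOn).mul
        (hφc l hl)).integrableOn_compact isCompact_Icc
    have hIpos : 0 ≤ ∫ y in Set.Icc (-l) l, J (x₀ - y) * φ l y :=
      setIntegral_nonneg measurableSet_Icc
        (fun y hy => mul_nonneg (hJpos _) (hφpos l hl y hy).le)
    have hIle : (∫ y in Set.Icc (-l) l, J (x₀ - y) * φ l y) ≤ 2 * l * M * φ l x₀ := by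
      have hle := setIntegral_mono_on hInt
        (integrableOn_const measure_Icc_lt_top.ne) measurableSet_Icc
        (fun y hy => mul_le_mul (le_ciSup hJbdd (x₀ - y)) (hmax hy)
          (hφpos l hl y hy).le hM0)
      have hconst : (∫ _ in Set.Icc (-l) l, M * φ l x₀) = 2 * l * (M * φ l x₀) := by
        rw [setIntegral_const, Real.volume_real_Icc_of_le (by linarith)]
        simp only [smul_eq_mul]; ring
      rw [hconst] at hle
      linarith [hle]
    have heq' : (lam l - f0 + d) * φ l x₀
        = d * ∫ y in Set.Icc (-l) l, J (x₀ - y) * φ l y := by linarith [heq]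
    constructor
    · by_contra h
      push_neg at h
      nlinarith [mul_nonneg hd.le hIpos]
    · have h1 : (lam l - f0 + d) * φ l x₀ ≤ (2 * l * d * M) * φ l x₀ := by
        rw [heq']
        nlinarith [hIle]
      exact le_of_mul_le_mul_right h1 hφ0
  refine ⟨fun l hl => by
    rw [abs_of_nonneg (key l hl).1]; exact (key l hl).2, ?_⟩
  rw [tendsto_iff_dist_tendsto_zero]
  have hb : Filter.Tendsto (fun l : ℝ => 2 * l * d * M)
      (nhdsWithin 0 (Set.Ioi 0)) (nhds 0) := by
    have : Filter.Tendsto (fun l : ℝ => 2 * l * d * M) (nhds 0) (nhds (2 * 0 * d * M)) :=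
      (Continuous.tendsto (by continuity) 0)
    simpa using this.mono_left nhdsWithin_le_nhds
  apply squeeze_zero' (Filter.Eventually.of_forall fun l => dist_nonneg) _ hb
  filter_upwards [self_mem_nhdsWithin] with l hl
  have := key l hl
  rw [Real.dist_eq]
  have : |lam l - (f0 - d)| = lam l - f0 + d := by
    rw [abs_of_nonneg (by linarith [this.1])]; ring
  rw [this]
  exact (key l hl).2
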